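/- Time-change construction of a solution of the singular transition-path ODE (from the Remark following the proof of Theorem 1): Let a: ℝ^d → ℝ^{d×d} and b: ℝ^d → ℝ^d be continuous, q: ℝ^d → ℝ be C¹, T > 0, and let z: [0,T] → ℝ^d be C¹ with z(0) = y₀, z'(s) = 2 a(z(s)) ∇q(z(s)) + q(z(s)) b(z(s)) for all s ∈ [0,T], and q(z(s)) > 0 for all s ∈ (0,T]. Define F(t) = ∫₀ᵗ q(z(s)) ds. Then F is a continuous, strictly increasing bijection from [0,T] onto [0, F(T)], and the function Ȳ := z ∘ F⁻¹ : [0, F(T)] → ℝ^d is continuous, satisfies Ȳ(0) = y₀ and q(Ȳ(t)) > 0 for t ∈ (0,F(T)], the map s ↦ b(Ȳ(s)) + 2 a(Ȳ(s)) ∇q(Ȳ(s)) / q(Ȳ(s)) is integrable on (0, F(T)], and Ȳ(t) = y₀ + ∫₀ᵗ [ b(Ȳ(s)) + 2 a(Ȳ(s)) ∇q(Ȳ(s)) / q(Ȳ(s)) ] ds for all t ∈ [0, F(T)]. -/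

import Mathlib

open scoped BigOperators
open Set MeasureTheory
open scoped Topology Interval

/-- Partial derivative `∂ᵢ u (x)` on `ℝ^d = (Fin d → ℝ)`. -/
noncomputable def pd {d : ℕ} (i : Fin d) (u : (Fin d → ℝ) → ℝ) (x : Fin d → ℝ) : ℝ :=
  fderiv ℝ u x (Pi.single i 1)

/-- The drift `K(y) = b(y) + 2 a(y)∇q(y) / q(y)` of the transition path process
(its `i`-th component). -/
noncomputable def Kdrift {d : ℕ} (a : (Fin d → ℝ) → Fin d → Fin d → ℝ)
    (b : (Fin d → ℝ) → Fin d → ℝ) (q : (Fin d → ℝ) → ℝ)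
    (y : Fin d → ℝ) : Fin d → ℝ :=
  fun i => b y i + 2 * (∑ j, a y i j * pd j q y) / q y

/-- Time-change construction: reparametrizing a solution `z` of the desingularized
ODE `z' = 2a(z)∇q(z) + q(z)b(z)` by the inverse of `F(t) = ∫₀ᵗ q(z(s)) ds`
produces a solution `Ȳ = z ∘ F⁻¹` of the singular integral equation
`Ȳ(t) = y₀ + ∫₀ᵗ K(Ȳ(s)) ds`. -/
theorem time_change_construction {d : ℕ} (hd : 1 ≤ d)
    (a : (Fin d → ℝ) → Fin d → Fin d → ℝ) (b : (Fin d → ℝ) → Fin d → ℝ)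
    (ha : Continuous a) (hb : Continuous b)
    (q : (Fin d → ℝ) → ℝ) (hq : ContDiff ℝ 1 q)
    (T : ℝ) (hT : 0 < T) (y₀ : Fin d → ℝ)
    (z : ℝ → Fin d → ℝ) (hz0 : z 0 = y₀)
    (hz' : ∀ s ∈ Icc (0 : ℝ) T,
      HasDerivWithinAt z
        (fun i => 2 * (∑ j, a (z s) i j * pd j q (z s)) + q (z s) * b (z s) i)
        (Icc (0 : ℝ) T) s)
    (hqz : ∀ s ∈ Ioc (0 : ℝ) T, 0 < q (z s))
    (F : ℝ → ℝ) (hF : F = fun t => ∫ s in (0 : ℝ)..t, q (z s)) :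
    StrictMonoOn F (Icc (0 : ℝ) T) ∧ ContinuousOn F (Icc (0 : ℝ) T) ∧
    F '' Icc (0 : ℝ) T = Icc (0 : ℝ) (F T) ∧
    ∃ G : ℝ → ℝ,
      (∀ t ∈ Icc (0 : ℝ) T, G (F t) = t) ∧
      (∀ u ∈ Icc (0 : ℝ) (F T), F (G u) = u) ∧
      ContinuousOn (fun t => z (G t)) (Icc (0 : ℝ) (F T)) ∧
      z (G 0) = y₀ ∧
      (∀ t ∈ Ioc (0 : ℝ) (F T), 0 < q (z (G t))) ∧
      IntegrableOn (fun s => Kdrift a b q (z (G s))) (Ioc (0 : ℝ) (F T)) ∧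
      ∀ t ∈ Icc (0 : ℝ) (F T),
        z (G t) = y₀ + ∫ s in (0 : ℝ)..t, Kdrift a b q (z (G s)) := by
  have hqc : Continuous q := hq.continuous
  have hzc : ContinuousOn z (Icc 0 T) := fun s hs => (hz' s hs).continuousWithinAt
  have hqzc : ContinuousOn (fun s => q (z s)) (Icc (0:ℝ) T) := hqc.comp_continuousOn hzc
  have hqzint : IntegrableOn (fun s => q (z s)) (Icc (0:ℝ) T) :=
    hqzc.integrableOn_compact isCompact_Icc
  have hII : ∀ t1 ∈ Icc (0:ℝ) T, ∀ t2 ∈ Icc (0:ℝ) T,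
      IntervalIntegrable (fun s => q (z s)) volume t1 t2 := by
    intro t1 h1 t2 h2
    exact (hqzint.mono_set (uIcc_subset_Icc h1 h2)).intervalIntegrable
  have hF0 : F 0 = 0 := by rw [hF]; simp
  have hFsub : ∀ t1 ∈ Icc (0:ℝ) T, ∀ t2 ∈ Icc (0:ℝ) T,
      F t2 - F t1 = ∫ s in t1..t2, q (z s) := by
    intro t1 h1 t2 h2
    have h0 : (0:ℝ) ∈ Icc (0:ℝ) T := ⟨le_rfl, hT.le⟩
    have := intervalIntegral.integral_add_adjacent_intervals (hII 0 h0 t1 h1) (hII t1 h1 t2 h2)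
    rw [hF]; simp only [] at this ⊢
    linarith
  have hFmono : StrictMonoOn F (Icc (0:ℝ) T) := by
    intro t1 h1 t2 h2 hlt
    have hpos : 0 < ∫ s in t1..t2, q (z s) := by
      apply intervalIntegral.intervalIntegral_pos_of_pos_on (hII t1 h1 t2 h2) _ hlt
      intro x hx
      exact hqz x ⟨lt_of_le_of_lt h1.1 hx.1, hx.2.le.trans h2.2⟩
    have := hFsub t1 h1 t2 h2
    linarith
  have hFcont : ContinuousOn F (Icc (0:ℝ) T) := by
    rw [hF]
    have := intervalIntegral.continuousOn_primitive_interval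
      (f := fun s => q (z s)) (μ := volume) (a := (0:ℝ)) (b := T)
      (by rwa [uIcc_of_le hT.le])
    rwa [uIcc_of_le hT.le] at this
  have hFTpos : 0 < F T := by
    have := hFmono ⟨le_rfl, hT.le⟩ ⟨hT.le, le_rfl⟩ hT
    rwa [hF0] at this
  have himg : F '' Icc (0:ℝ) T = Icc 0 (F T) := by
    apply Subset.antisymm
    · rintro _ ⟨x, hx, rfl⟩
      exact ⟨hF0 ▸ hFmono.monotoneOn ⟨le_rfl, hT.le⟩ hx hx.1,
        hFmono.monotoneOn hx ⟨hT.le, le_rfl⟩ hx.2⟩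
    · have h := intermediate_value_Icc hT.le hFcont
      rwa [hF0] at h
  refine ⟨hFmono, hFcont, himg, ?_⟩
  set G : ℝ → ℝ := Function.invFunOn F (Icc (0:ℝ) T) with hGdef
  have hInj : InjOn F (Icc (0:ℝ) T) := hFmono.injOn
  have hGF : ∀ t ∈ Icc (0:ℝ) T, G (F t) = t := fun t ht => hInj.leftInvOn_invFunOn ht
  have hex : ∀ u ∈ Icc (0:ℝ) (F T), ∃ x ∈ Icc (0:ℝ) T, F x = u := by
    intro u hu
    rw [← himg] at hu
    exact hu
  have hmemG : ∀ u ∈ Icc (0:ℝ) (F T), G u ∈ Icc (0:ℝ) T := fun u hu =>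
    Function.invFunOn_mem (hex u hu)
  have hFG : ∀ u ∈ Icc (0:ℝ) (F T), F (G u) = u := fun u hu => Function.invFunOn_eq (hex u hu)
  have hG0 : G 0 = 0 := by
    have := hGF 0 ⟨le_rfl, hT.le⟩
    rwa [hF0] at this
  have hGpos : ∀ u ∈ Ioc (0:ℝ) (F T), G u ∈ Ioc (0:ℝ) T := by
    intro u hu
    have hu' : u ∈ Icc (0:ℝ) (F T) := ⟨hu.1.le, hu.2⟩
    refine ⟨lt_of_le_of_ne (hmemG u hu').1 ?_, (hmemG u hu').2⟩
    intro h
    have := hFG u hu'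
    rw [← h, hF0] at this
    exact absurd this.symm (ne_of_gt hu.1)
  have hGmono : MonotoneOn G (Icc (0:ℝ) (F T)) := by
    intro u hu v hv huv
    by_contra hlt
    push_neg at hlt
    have := hFmono (hmemG v hv) (hmemG u hu) hlt
    rw [hFG u hu, hFG v hv] at this
    exact absurd huv (not_le.2 this)
  -- continuity of G via compactness
  have hGcont : ContinuousOn G (Icc (0:ℝ) (F T)) := by
    haveI : CompactSpace (Icc (0:ℝ) T) := isCompact_iff_compactSpace.mp isCompact_Icc
    have hFrestr : Continuous fun x : Icc (0:ℝ) T => (⟨F x, himg ▸ mem_image_of_mem F x.2⟩ :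
        Icc (0:ℝ) (F T)) := by
      apply Continuous.subtype_mk
      exact hFcont.restrict
    have hbij : Function.Bijective fun x : Icc (0:ℝ) T => (⟨F x, himg ▸ mem_image_of_mem F x.2⟩ :
        Icc (0:ℝ) (F T)) := by
      constructor
      · intro x y hxy
        exact Subtype.ext (hInj x.2 y.2 (congrArg Subtype.val hxy))
      · rintro ⟨u, hu⟩
        obtain ⟨x, hx, rfl⟩ := hex u hu
        exact ⟨⟨x, hx⟩, rfl⟩
    let e := Equiv.ofBijective _ hbij
    let hhomeo := Continuous.homeoOfEquivCompactToT2 (f := e) hFrestr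
    rw [continuousOn_iff_continuous_restrict]
    have heq : (Icc (0:ℝ) (F T)).restrict G =
        Subtype.val ∘ hhomeo.symm := by
      funext u
      have h1 : F ((hhomeo.symm u : Icc (0:ℝ) T) : ℝ) = (u : ℝ) := by
        have h := hhomeo.apply_symm_apply u
        have h' : e (hhomeo.symm u) = u := h
        exact congrArg Subtype.val h'
      have h2 : F (G u) = (u : ℝ) := hFG u u.2
      exact hInj (hmemG u u.2) (hhomeo.symm u).2 (h2.trans h1.symm)
    change Continuous ((Icc (0:ℝ) (F T)).restrict G)
    rw [heq]
    exact continuous_subtype_val.comp hhomeo.symm.continuous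
  have hGmaps : MapsTo G (Icc (0:ℝ) (F T)) (Icc (0:ℝ) T) := fun u hu => hmemG u hu
  have hzGcont : ContinuousOn (fun t => z (G t)) (Icc (0:ℝ) (F T)) :=
    hzc.comp hGcont hGmaps
  have hzG0 : z (G 0) = y₀ := by rw [hG0, hz0]
  have hqzG : ∀ t ∈ Ioc (0:ℝ) (F T), 0 < q (z (G t)) := fun t ht => hqz (G t) (hGpos t ht)
  -- the desingularized vector field along z
  set w : ℝ → Fin d → ℝ :=
    fun s => fun i => 2 * (∑ j, a (z s) i j * pd j q (z s)) + q (z s) * b (z s) i with hwdef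
  have hpdc : ∀ j : Fin d, Continuous fun y => pd j q y := by
    intro j
    exact (hq.continuous_fderiv one_ne_zero).clm_apply continuous_const
  have hWc : Continuous fun y : Fin d → ℝ =>
      (fun i => 2 * (∑ j, a y i j * pd j q y) + q y * b y i : Fin d → ℝ) := by
    apply continuous_pi
    intro i
    apply Continuous.add
    · apply continuous_const.mul
      apply continuous_finset_sum
      intro j _
      exact ((continuous_apply j).comp ((continuous_apply i).comp ha)).mul (hpdc j)
    · exact hqc.mul ((continuous_apply i).comp hb)
  have hwcont : ContinuousOn w (Icc (0:ℝ) T) := hWc.comp_continuousOn hzc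
  have hKcont : ContinuousOn (fun y => Kdrift a b q y) {y | 0 < q y} := by
    rw [continuousOn_pi]
    intro i
    show ContinuousOn (fun y => b y i + 2 * (∑ j, a y i j * pd j q y) / q y) _
    apply ContinuousOn.add
    · exact ((continuous_apply i).comp hb).continuousOn
    · apply ContinuousOn.div
      · exact (continuous_const.mul (continuous_finset_sum _ fun j _ =>
          ((continuous_apply j).comp ((continuous_apply i).comp ha)).mul (hpdc j))).continuousOn
      · exact hqc.continuousOn
      · exact fun y hy => ne_of_gt hy
  have hgcont : ContinuousOn (fun s => Kdrift a b q (z (G s))) (Ioc (0:ℝ) (F T)) :=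
    hKcont.comp (hzGcont.mono Ioc_subset_Icc_self) (fun s hs => hqzG s hs)
  -- generic change-of-variables identity
  have key : ∀ (E : Type) [NormedAddCommGroup E] [inst2 : NormedSpace ℝ E]
      (g : ℝ → E) (v : ℝ → E), ContinuousOn g (Ioc (0:ℝ) (F T)) →
      ContinuousOn v (Icc (0:ℝ) T) →
      (∀ x ∈ Ioc (0:ℝ) T, q (z x) • g (F x) = v x) →
      ∀ ε t : ℝ, 0 < ε → ε ≤ t → t ≤ F T →
      (∫ s in ε..t, g s) = ∫ x in (G ε)..(G t), v x := by
    intro E _ _ g v hg hv hgv ε t hε hεt htT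
    have hεm : ε ∈ Icc (0:ℝ) (F T) := ⟨hε.le, hεt.trans htT⟩
    have htm : t ∈ Icc (0:ℝ) (F T) := ⟨hε.le.trans hεt, htT⟩
    set α := G ε with hα
    set β := G t with hβ
    have hαm : α ∈ Ioc (0:ℝ) T := hGpos ε ⟨hε, hεt.trans htT⟩
    have hβm : β ∈ Ioc (0:ℝ) T := hGpos t ⟨hε.trans_le hεt, htT⟩
    have hαβ : α ≤ β := hGmono hεm htm hεt
    have hsub : Icc α β ⊆ Icc (0:ℝ) T := Icc_subset_Icc hαm.1.le hβm.2
    have huIcc : [[α, β]] = Icc α β := uIcc_of_le hαβ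
    have hFder : ∀ x ∈ Ioo α β, HasDerivAt F (q (z x)) x := by
      intro x hx
      have hx0T : x ∈ Ioo (0:ℝ) T := ⟨hαm.1.trans hx.1, hx.2.trans_le hβm.2⟩
      have hmem : Icc (0:ℝ) T ∈ 𝓝 x := Icc_mem_nhds hx0T.1 hx0T.2
      have hca : ContinuousAt (fun s => q (z s)) x := hqzc.continuousAt hmem
      have hsm : StronglyMeasurableAtFilter (fun s => q (z s)) (𝓝 x) volume :=
        (hqzc.mono Ioo_subset_Icc_self).stronglyMeasurableAtFilter isOpen_Ioo x hx0T
      have hda := intervalIntegral.integral_hasDerivAt_right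
        (hII 0 ⟨le_rfl, hT.le⟩ x ⟨hx0T.1.le, hx0T.2.le⟩) hsm hca
      rw [hF]
      exact hda
    have himgsub : F '' [[α, β]] ⊆ Ioc (0:ℝ) (F T) := by
      rintro _ ⟨x, hx, rfl⟩
      rw [huIcc] at hx
      have hx' : x ∈ Icc (0:ℝ) T := hsub hx
      constructor
      · calc (0:ℝ) < ε := hε
          _ = F α := (hFG ε hεm).symm
          _ ≤ F x := hFmono.monotoneOn (hsub ⟨le_rfl, hαβ⟩) hx' hx.1
      · calc F x ≤ F β := hFmono.monotoneOn hx' (hsub ⟨hαβ, le_rfl⟩) hx.2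
          _ = t := hFG t htm
          _ ≤ F T := htT
    have hsubst : (∫ x in α..β, (q (z x)) • (g ∘ F) x) = ∫ s in F α..F β, g s := by
      apply intervalIntegral.integral_comp_smul_deriv'' (hFcont.mono (huIcc ▸ hsub))
      · rw [min_eq_left hαβ, max_eq_right hαβ]
        exact fun x hx => (hFder x hx).hasDerivWithinAt
      · exact hqzc.mono (huIcc ▸ hsub)
      · exact hg.mono himgsub
    have hcongr : (∫ x in α..β, (q (z x)) • (g ∘ F) x) = ∫ x in α..β, v x := by
      apply intervalIntegral.integral_congr
      intro x hx
      rw [huIcc] at hx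
      have hx' : x ∈ Ioc (0:ℝ) T := ⟨lt_of_lt_of_le hαm.1 hx.1, hx.2.trans hβm.2⟩
      exact hgv x hx'
    calc (∫ s in ε..t, g s) = ∫ s in F α..F β, g s := by rw [hFG ε hεm, hFG t htm]
      _ = ∫ x in α..β, (q (z x)) • (g ∘ F) x := hsubst.symm
      _ = ∫ x in α..β, v x := hcongr
  -- the pointwise identity K(z(G(F x))) = q(z x)⁻¹ • w x
  have hgw : ∀ x ∈ Ioc (0:ℝ) T, q (z x) • Kdrift a b q (z (G (F x))) = w x := by
    intro x hx
    have hx' : x ∈ Icc (0:ℝ) T := ⟨hx.1.le, hx.2⟩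
    rw [hGF x hx']
    funext i
    have hqx : q (z x) ≠ 0 := ne_of_gt (hqz x hx)
    rw [Pi.smul_apply, smul_eq_mul]
    show q (z x) * (b (z x) i + 2 * (∑ j, a (z x) i j * pd j q (z x)) / q (z x)) =
      2 * (∑ j, a (z x) i j * pd j q (z x)) + q (z x) * b (z x) i
    field_simp
    ring
  -- FTC for w
  have hFTC : ∀ α β : ℝ, α ∈ Ioc (0:ℝ) T → β ∈ Ioc (0:ℝ) T → α ≤ β →
      (∫ x in α..β, w x) = z β - z α := by
    intro α β hαm hβm hαβ
    have hsub : Icc α β ⊆ Icc (0:ℝ) T := Icc_subset_Icc hαm.1.le hβm.2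
    have huIcc : [[α, β]] = Icc α β := uIcc_of_le hαβ
    have hzder : ∀ x ∈ Ioo α β, HasDerivWithinAt z (w x) (Ioi x) x := by
      intro x hx
      have hx0T : x ∈ Ioo (0:ℝ) T := ⟨hαm.1.trans hx.1, hx.2.trans_le hβm.2⟩
      have hmem : Icc (0:ℝ) T ∈ 𝓝 x := Icc_mem_nhds hx0T.1 hx0T.2
      exact ((hz' x ⟨hx0T.1.le, hx0T.2.le⟩).hasDerivAt hmem).hasDerivWithinAt
    apply intervalIntegral.integral_eq_sub_of_hasDeriv_right_of_le hαβ (hzc.mono hsub) hzder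
    exact (hwcont.mono (huIcc ▸ hsub)).intervalIntegrable
  have hGFT : G (F T) = T := hGF T ⟨hT.le, le_rfl⟩
  -- the main interval identity for 0 < ε ≤ t ≤ F T
  have hmain : ∀ ε t : ℝ, 0 < ε → ε ≤ t → t ≤ F T →
      (∫ s in ε..t, Kdrift a b q (z (G s))) = z (G t) - z (G ε) := by
    intro ε t hε hεt htT
    have h1 := key (Fin d → ℝ) (fun s => Kdrift a b q (z (G s))) w hgcont hwcont hgw
      ε t hε hεt htT
    rw [h1]
    exact hFTC (G ε) (G t) (hGpos ε ⟨hε, hεt.trans htT⟩)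
      (hGpos t ⟨hε.trans_le hεt, htT⟩) (hGmono ⟨hε.le, hεt.trans htT⟩ ⟨hε.le.trans hεt, htT⟩ hεt)
  -- bound on the sup of ‖w‖
  obtain ⟨M, hM⟩ := isCompact_Icc.exists_bound_of_continuousOn hwcont
  have hM0 : 0 ≤ M := le_trans (norm_nonneg _) (hM 0 ⟨le_rfl, hT.le⟩)
  -- scalar substitution for the norm
  have hNcont : ContinuousOn (fun s => ‖Kdrift a b q (z (G s))‖) (Ioc (0:ℝ) (F T)) :=
    hgcont.norm
  have hNw : ∀ x ∈ Ioc (0:ℝ) T, q (z x) • ‖Kdrift a b q (z (G (F x)))‖ = ‖w x‖ := by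
    intro x hx
    have hqx : 0 < q (z x) := hqz x hx
    rw [smul_eq_mul, ← hgw x hx, norm_smul, Real.norm_eq_abs, abs_of_pos hqx]
  have hNbound : ∀ ε, 0 < ε → ε ≤ F T →
      (∫ s in ε..F T, ‖Kdrift a b q (z (G s))‖) ≤ M * T := by
    intro ε hε hεFT
    have h1 := key ℝ (fun s => ‖Kdrift a b q (z (G s))‖) (fun x => ‖w x‖) hNcont
      hwcont.norm hNw ε (F T) hε hεFT le_rfl
    rw [h1, hGFT]
    set α := G ε with hα
    have hαm : α ∈ Ioc (0:ℝ) T := hGpos ε ⟨hε, hεFT⟩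
    have hαT : α ≤ T := hαm.2
    have h2 : (∫ x in α..T, ‖w x‖) ≤ ∫ x in α..T, M := by
      apply intervalIntegral.integral_mono_on hαT
      · exact ((hwcont.norm).mono ((uIcc_of_le hαT) ▸ (Icc_subset_Icc hαm.1.le le_rfl))).intervalIntegrable
      · exact intervalIntegrable_const
      · intro x hx
        exact hM x ⟨hαm.1.le.trans hx.1, hx.2⟩
    have h3 : (∫ x in α..T, (M:ℝ)) = (T - α) * M := by
      rw [intervalIntegral.integral_const, smul_eq_mul]
    calc (∫ x in α..T, ‖w x‖) ≤ (T - α) * M := h2.trans_eq h3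
      _ ≤ T * M := by nlinarith [hαm.1.le]
      _ = M * T := by ring
  -- integrability
  have hgint : IntegrableOn (fun s => Kdrift a b q (z (G s))) (Ioc (0:ℝ) (F T)) := by
    apply MeasureTheory.integrableOn_Ioc_of_intervalIntegral_norm_bounded_left
      (l := Filter.atTop) (a := fun n : ℕ => F T / (n + 1)) (I := M * T)
    · intro n
      have hpos : 0 < F T / ((n:ℝ) + 1) := by positivity
      have hsub2 : Icc (F T / ((n:ℝ) + 1)) (F T) ⊆ Ioc (0:ℝ) (F T) := fun x hx =>
        ⟨lt_of_lt_of_le hpos hx.1, hx.2⟩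
      exact (((hgcont.mono hsub2).integrableOn_compact isCompact_Icc).mono_set
        Ioc_subset_Icc_self)
    · have h0 : Filter.Tendsto (fun n : ℕ => ((n:ℝ) + 1)) Filter.atTop Filter.atTop :=
        Filter.tendsto_atTop_add_const_right _ 1 tendsto_natCast_atTop_atTop
      simpa using Filter.Tendsto.div_atTop tendsto_const_nhds h0
    · apply Filter.Eventually.of_forall
      intro n
      have hpos : 0 < F T / ((n:ℝ) + 1) := by positivity
      have hle : F T / ((n:ℝ) + 1) ≤ F T := by
        apply div_le_self hFTpos.le
        simp
      have := hNbound (F T / ((n:ℝ) + 1)) hpos hle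
      rwa [intervalIntegral.integral_of_le hle] at this
  refine ⟨G, hGF, hFG, hzGcont, hzG0, hqzG, hgint, ?_⟩
  -- the integral equation
  have hgIcc : IntegrableOn (fun s => Kdrift a b q (z (G s))) (Icc (0:ℝ) (F T)) := by
    rw [IntegrableOn, ← Measure.restrict_congr_set Ioc_ae_eq_Icc]
    exact hgint
  have hPcont : ContinuousOn (fun u => ∫ s in (0:ℝ)..u, Kdrift a b q (z (G s)))
      (Icc (0:ℝ) (F T)) := by
    have := intervalIntegral.continuousOn_primitive_interval
      (f := fun s => Kdrift a b q (z (G s))) (μ := volume) (a := (0:ℝ)) (b := F T)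
      (by rwa [uIcc_of_le hFTpos.le])
    rwa [uIcc_of_le hFTpos.le] at this
  intro t ht
  rcases eq_or_lt_of_le ht.1 with h0 | h0
  · rw [← h0, intervalIntegral.integral_same, add_zero]
    exact hzG0
  · -- t > 0
    set g : ℝ → Fin d → ℝ := fun s => Kdrift a b q (z (G s)) with hg
    set seq : ℕ → ℝ := fun n => t / (n + 1) with hseq
    have hseqpos : ∀ n, 0 < seq n := by intro n; positivity
    have hseqle : ∀ n, seq n ≤ t := by
      intro n
      apply div_le_self h0.le
      simp
    have hseq0 : Filter.Tendsto seq Filter.atTop (𝓝 0) := by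
      have h0' : Filter.Tendsto (fun n : ℕ => ((n:ℝ) + 1)) Filter.atTop Filter.atTop :=
        Filter.tendsto_atTop_add_const_right _ 1 tendsto_natCast_atTop_atTop
      simpa using Filter.Tendsto.div_atTop (tendsto_const_nhds (x := t)) h0'
    have hseqmem : ∀ n, seq n ∈ Icc (0:ℝ) (F T) :=
      fun n => ⟨(hseqpos n).le, (hseqle n).trans ht.2⟩
    have hseq0' : Filter.Tendsto seq Filter.atTop (𝓝[Icc (0:ℝ) (F T)] 0) :=
      tendsto_nhdsWithin_of_tendsto_nhds_of_eventually_within seq hseq0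
        (Filter.Eventually.of_forall hseqmem)
    -- limit of the left side
    have hL : Filter.Tendsto (fun n => z (G t) - z (G (seq n))) Filter.atTop
        (𝓝 (z (G t) - y₀)) := by
      have hc : Filter.Tendsto (fun n => z (G (seq n))) Filter.atTop (𝓝 (z (G 0))) :=
        (hzGcont 0 ⟨le_rfl, hFTpos.le⟩).tendsto.comp hseq0'
      rw [hzG0] at hc
      exact tendsto_const_nhds.sub hc
    -- limit of the right side
    have hR : Filter.Tendsto (fun n => ∫ s in seq n..t, g s) Filter.atTop
        (𝓝 (∫ s in (0:ℝ)..t, g s)) := by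
      have hII' : ∀ u v : ℝ, u ∈ Icc (0:ℝ) (F T) → v ∈ Icc (0:ℝ) (F T) →
          IntervalIntegrable g volume u v := by
        intro u v hu hv
        exact (hgIcc.mono_set (uIcc_subset_Icc hu hv)).intervalIntegrable
      have hsplit : ∀ n, (∫ s in seq n..t, g s) =
          (∫ s in (0:ℝ)..t, g s) - ∫ s in (0:ℝ)..seq n, g s := by
        intro n
        have := intervalIntegral.integral_add_adjacent_intervals
          (hII' 0 (seq n) ⟨le_rfl, hFTpos.le⟩ (hseqmem n))
          (hII' (seq n) t (hseqmem n) ⟨h0.le, ht.2⟩)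
        rw [← this]
        abel
      simp_rw [hsplit]
      have hc : Filter.Tendsto (fun n => ∫ s in (0:ℝ)..seq n, g s) Filter.atTop
          (𝓝 (∫ s in (0:ℝ)..(0:ℝ), g s)) :=
        (hPcont 0 ⟨le_rfl, hFTpos.le⟩).tendsto.comp hseq0'
      rw [intervalIntegral.integral_same] at hc
      simpa using tendsto_const_nhds.sub hc
    have heqn : ∀ n, (∫ s in seq n..t, g s) = z (G t) - z (G (seq n)) :=
      fun n => hmain (seq n) t (hseqpos n) (hseqle n) ht.2
    have : z (G t) - y₀ = ∫ s in (0:ℝ)..t, g s := by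
      apply tendsto_nhds_unique hL
      simpa only [heqn] using hR
    rw [← this]
    abel
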